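/- Let n ≥ 1 and let α, β : Fin n → ℝ be such that the 2n complex numbers e^{2πi α(i)} and e^{2πi β(j)} are pairwise distinct. Let M₀ be the diagonal matrix with diagonal entries e^{2πi α(k)}, let 𝟏 ∈ ℂⁿ be the all-ones vector, let w ∈ ℂⁿ, and set M₁ := Id + M₀⁻¹ ⬝ (𝟏 ⬝ wᵀ). If det (M₀ ⬝ M₁ − e^{2πi β(j)} • Id) = 0 for every j, then for every j one has ∑ i, w i / (e^{2πi β(j)} − e^{2πi α(i)}) = 1. -/

import Mathlib

open Matrix Complex

theorem monodromy_linear_system (n : ℕ) (hn : 1 ≤ n) (α β : Fin n → ℝ)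
    (hdist : Function.Injective
      (Sum.elim (fun i => Complex.exp (2 * Real.pi * Complex.I * α i))
        (fun j => Complex.exp (2 * Real.pi * Complex.I * β j)) : Fin n ⊕ Fin n → ℂ))
    (w : Fin n → ℂ)
    (M₀ : Matrix (Fin n) (Fin n) ℂ)
    (hM₀ : M₀ = Matrix.diagonal fun k => Complex.exp (2 * Real.pi * Complex.I * α k))
    (M₁ : Matrix (Fin n) (Fin n) ℂ)
    (hM₁ : M₁ = 1 + M₀⁻¹ * Matrix.vecMulVec (fun _ => (1 : ℂ)) w)
    (hdet : ∀ j, (M₀ * M₁ -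
      Complex.exp (2 * Real.pi * Complex.I * β j) • (1 : Matrix (Fin n) (Fin n) ℂ)).det = 0) :
    ∀ j, ∑ i, w i / (Complex.exp (2 * Real.pi * Complex.I * β j) -
        Complex.exp (2 * Real.pi * Complex.I * α i)) = 1 := by
  intro j
  set a : Fin n → ℂ := fun i => Complex.exp (2 * Real.pi * Complex.I * α i) with ha
  set b : ℂ := Complex.exp (2 * Real.pi * Complex.I * β j) with hb
  have hab : ∀ i, a i ≠ b := by
    intro i h
    have : (Sum.inl i : Fin n ⊕ Fin n) = Sum.inr j := hdist h
    simp at this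
  -- M₀ is invertible
  have hM₀det : IsUnit M₀.det := by
    rw [hM₀, det_diagonal]
    exact isUnit_iff_ne_zero.2 (Finset.prod_ne_zero_iff.2 fun i _ => Complex.exp_ne_zero _)
  have hMM : M₀ * M₁ = M₀ + Matrix.vecMulVec (fun _ => (1 : ℂ)) w := by
    rw [hM₁, mul_add, mul_one, ← Matrix.mul_assoc,
      Matrix.mul_nonsing_inv _ hM₀det, Matrix.one_mul]
  have key := hdet j
  rw [hMM] at key
  have hD : M₀ - b • (1 : Matrix (Fin n) (Fin n) ℂ) = Matrix.diagonal (fun i => a i - b) := by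
    rw [hM₀, smul_eq_diagonal_mul, Matrix.mul_one, ← Matrix.diagonal_sub]
  have hrw : M₀ + Matrix.vecMulVec (fun _ => (1 : ℂ)) w - b • (1 : Matrix (Fin n) (Fin n) ℂ)
      = Matrix.diagonal (fun i => a i - b) +
        Matrix.replicateCol (Fin 1) (fun _ => (1 : ℂ)) * Matrix.replicateRow (Fin 1) w := by
    rw [Matrix.vecMulVec_eq (ι := Fin 1), ← hD, add_sub_right_comm]
    rfl
  rw [hrw] at key
  have hDdet : IsUnit (Matrix.diagonal (fun i => a i - b)).det := by
    rw [det_diagonal]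
    exact isUnit_iff_ne_zero.2 (Finset.prod_ne_zero_iff.2 fun i _ => sub_ne_zero.2 (hab i))
  rw [Matrix.det_add_mul (Matrix.replicateCol (Fin 1) fun _ => (1:ℂ)) (Matrix.replicateRow (Fin 1) w) hDdet] at key
  rcases mul_eq_zero.1 key with h | h
  · exact absurd h hDdet.ne_zero
  · -- det of a 1×1 matrix
    rw [Matrix.det_fin_one] at h
    have hinv : (Matrix.diagonal (fun i => a i - b))⁻¹
        = Matrix.diagonal (fun i => (a i - b)⁻¹) :=
      Matrix.inv_eq_right_inv (by
        rw [Matrix.diagonal_mul_diagonal,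
          show (fun i => (a i - b) * (a i - b)⁻¹) = fun _ => (1 : ℂ) from
            funext fun i => mul_inv_cancel₀ (sub_ne_zero.2 (hab i)),
          Matrix.diagonal_one])
    rw [hinv] at h
    have hsum : (1 : ℂ) + ∑ i, w i * (a i - b)⁻¹ = 0 := by
      convert h using 2
      simp [Matrix.mul_apply, Matrix.replicateRow_apply, Matrix.replicateCol_apply, Matrix.diagonal_apply,
        Finset.mul_sum, mul_comm]
    have : ∑ i, w i / (b - a i) = -∑ i, w i * (a i - b)⁻¹ := by
      rw [← Finset.sum_neg_distrib]
      refine Finset.sum_congr rfl fun i _ => ?_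
      rw [div_eq_mul_inv, show b - a i = -(a i - b) by ring, inv_neg, mul_neg]
    rw [this]
    linear_combination -hsum
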